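/- Let P be a closed convex cone in ℝ^d that is spanning (P − P = ℝ^d) and pointed (P ∩ (−P) = {0}). Let Q ⊆ ℝ^d be a closed set with Q ≠ ℝ^d, −P ⊆ Q, Q + Q ⊆ Q, and Q ∪ (−Q) = ℝ^d. Then Q ∩ (−Q) is a linear subspace of ℝ^d of dimension d − 1. -/

import Mathlib

open Pointwise Filter

section Aux
variable {E : Type*} [NormedAddCommGroup E] [NormedSpace ℝ E]

/-- A closed set containing `0`, closed under addition, whose union with its
negation is everything, is closed under nonnegative scalar multiplication. -/
lemma cone_of_closed_semigroup {Q : Set E} (hcl : IsClosed Q) (h0 : (0 : E) ∈ Q)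
    (hadd : Q + Q ⊆ Q) (htot : Q ∪ (-Q) = Set.univ) :
    ∀ t : ℝ, 0 ≤ t → ∀ q ∈ Q, t • q ∈ Q := by
  have half : ∀ x ∈ Q, (2⁻¹ : ℝ) • x ∈ Q := by
    intro x hx
    have : (2⁻¹ : ℝ) • x ∈ Q ∪ (-Q) := htot ▸ Set.mem_univ _
    rcases this with h | h
    · exact h
    · have hneg : -((2⁻¹ : ℝ) • x) ∈ Q := Set.mem_neg.mp h
      have : x + -((2⁻¹ : ℝ) • x) ∈ Q := hadd (Set.add_mem_add hx hneg)
      convert this using 1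
      module
  have halfpow : ∀ k : ℕ, ∀ x ∈ Q, ((2⁻¹ : ℝ) ^ k) • x ∈ Q := by
    intro k
    induction k with
    | zero => intro x hx; simpa using hx
    | succ n ih =>
        intro x hx
        have := half _ (ih x hx)
        convert this using 1
        rw [smul_smul, pow_succ]
        ring_nf
  have natmul : ∀ n : ℕ, ∀ x ∈ Q, (n : ℝ) • x ∈ Q := by
    intro n
    induction n with
    | zero => intro x _; simpa using h0
    | succ m ih =>
        intro x hx
        have : (m : ℝ) • x + x ∈ Q := hadd (Set.add_mem_add (ih x hx) hx)
        convert this using 1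
        push_cast
        module
  intro t ht q hq
  have dyadic : ∀ k : ℕ, ((⌊t * 2 ^ k⌋₊ : ℝ) * (2⁻¹ : ℝ) ^ k) • q ∈ Q := by
    intro k
    rw [mul_smul]
    exact natmul _ _ (halfpow k q hq)
  set c : ℕ → ℝ := fun k => (⌊t * 2 ^ k⌋₊ : ℝ) * (2⁻¹ : ℝ) ^ k with hc
  have hpow : ∀ k : ℕ, (0:ℝ) < 2 ^ k := fun k => by positivity
  have hle : ∀ k, c k ≤ t := by
    intro k
    have h1 : (⌊t * 2 ^ k⌋₊ : ℝ) ≤ t * 2 ^ k := Nat.floor_le (by positivity)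
    have := hpow k
    rw [hc]
    simp only []
    rw [inv_pow]
    rw [mul_inv_le_iff₀ this]
    exact h1
  have hge : ∀ k, t - (2⁻¹:ℝ) ^ k ≤ c k := by
    intro k
    have h2 : t * 2 ^ k < (⌊t * 2 ^ k⌋₊ : ℝ) + 1 := Nat.lt_floor_add_one _
    have := hpow k
    have h3 : t < c k + (2⁻¹:ℝ) ^ k := by
      have h4 : t < ((⌊t * 2 ^ k⌋₊ : ℝ) + 1) / 2 ^ k := (lt_div_iff₀ this).mpr h2
      have h5 : ((⌊t * 2 ^ k⌋₊ : ℝ) + 1) / 2 ^ k = c k + (2⁻¹:ℝ) ^ k := by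
        rw [hc]; simp only [inv_pow]; field_simp
      linarith
    linarith
  have htend : Tendsto c atTop (nhds t) := by
    have hup : Tendsto (fun _ : ℕ => t) atTop (nhds t) := tendsto_const_nhds
    have hlow : Tendsto (fun k : ℕ => t - (2⁻¹:ℝ) ^ k) atTop (nhds t) := by
      have := tendsto_pow_atTop_nhds_zero_of_lt_one (by norm_num : (0:ℝ) ≤ 2⁻¹)
        (by norm_num : (2⁻¹:ℝ) < 1)
      simpa using tendsto_const_nhds.sub this
    exact tendsto_of_tendsto_of_tendsto_of_le_of_le hlow hup hge hle
  have : Tendsto (fun k => c k • q) atTop (nhds (t • q)) := htend.smul_const q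
  exact hcl.mem_of_tendsto this (Filter.Eventually.of_forall dyadic)

end Aux

/-- Let `P` be a closed convex cone in `ℝ^d` that is spanning and
pointed. Let `Q ⊆ ℝ^d` be a closed set with `Q ≠ ℝ^d`, `-P ⊆ Q`, `Q + Q ⊆ Q`, and
`Q ∪ (-Q) = ℝ^d`. Then `Q ∩ (-Q)` is a linear subspace of `ℝ^d` of dimension `d - 1`. -/
theorem stmt_3 {d : ℕ}
    (P : Set (EuclideanSpace ℝ (Fin d)))
    (hPclosed : IsClosed P) (hPconvex : Convex ℝ P)
    (hPcone : ∀ (c : ℝ), 0 ≤ c → ∀ x ∈ P, c • x ∈ P)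
    (hPspan : P - P = Set.univ)
    (hPpointed : P ∩ (-P) = {0})
    (Q : Set (EuclideanSpace ℝ (Fin d)))
    (hQclosed : IsClosed Q) (hQnuniv : Q ≠ Set.univ)
    (hPQ : -P ⊆ Q) (hQadd : Q + Q ⊆ Q) (hQtot : Q ∪ (-Q) = Set.univ) :
    ∃ S : Submodule ℝ (EuclideanSpace ℝ (Fin d)),
      (S : Set (EuclideanSpace ℝ (Fin d))) = Q ∩ (-Q) ∧
      Module.finrank ℝ S = d - 1 := by
  -- `0 ∈ P`, hence `0 ∈ Q`
  have h0P : (0 : EuclideanSpace ℝ (Fin d)) ∈ P := by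
    have h00 : (0 : EuclideanSpace ℝ (Fin d)) ∈ P - P := hPspan ▸ Set.mem_univ _
    rcases Set.mem_sub.mp h00 with ⟨a, ha, b, hb, hab⟩
    simpa using hPcone 0 le_rfl a ha
  have h0Q : (0 : EuclideanSpace ℝ (Fin d)) ∈ Q := hPQ (by simpa using h0P)
  have hcone := cone_of_closed_semigroup hQclosed h0Q hQadd hQtot
  -- the subspace `M = Q ∩ (-Q)`
  let M : Submodule ℝ (EuclideanSpace ℝ (Fin d)) :=
    { carrier := Q ∩ (-Q)
      add_mem' := by
        rintro x y ⟨hx1, hx2⟩ ⟨hy1, hy2⟩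
        refine ⟨hQadd (Set.add_mem_add hx1 hy1), ?_⟩
        rw [Set.mem_neg]
        have := hQadd (Set.add_mem_add (Set.mem_neg.mp hx2) (Set.mem_neg.mp hy2))
        simpa [neg_add, add_comm] using this
      zero_mem' := ⟨h0Q, by rw [Set.mem_neg]; simpa using h0Q⟩
      smul_mem' := by
        rintro c x ⟨hx1, hx2⟩
        rcases le_or_gt 0 c with hc | hc
        · refine ⟨hcone c hc x hx1, ?_⟩
          rw [Set.mem_neg]
          have := hcone c hc (-x) (Set.mem_neg.mp hx2)
          simpa using this
        · refine ⟨?_, ?_⟩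
          · have := hcone (-c) (by linarith) (-x) (Set.mem_neg.mp hx2)
            simpa using this
          · rw [Set.mem_neg]
            have := hcone (-c) (by linarith) x hx1
            simpa using this }
  have hMset : (M : Set (EuclideanSpace ℝ (Fin d))) = Q ∩ (-Q) := rfl
  refine ⟨M, hMset, ?_⟩
  have hsum : Module.finrank ℝ M + Module.finrank ℝ Mᗮ = d := by
    simpa [finrank_euclideanSpace_fin] using Submodule.finrank_add_finrank_orthogonal M
  -- the orthogonal complement is not trivial
  have hWne : Module.finrank ℝ Mᗮ ≠ 0 := by
    intro h
    have hWbot : Mᗮ = ⊥ := Submodule.finrank_eq_zero.mp h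
    have hMtop : M = ⊤ := by
      calc M = Mᗮᗮ := (Submodule.orthogonal_orthogonal M).symm
      _ = (⊥ : Submodule ℝ (EuclideanSpace ℝ (Fin d)))ᗮ := by rw [hWbot]
      _ = ⊤ := Submodule.bot_orthogonal_eq_top
    apply hQnuniv
    apply Set.eq_univ_iff_forall.mpr
    intro x
    have hx : x ∈ M := by rw [hMtop]; trivial
    exact (hMset ▸ hx : x ∈ Q ∩ (-Q)).1
  -- the orthogonal complement has dimension at most one
  have hWle : Module.finrank ℝ Mᗮ ≤ 1 := by
    by_contra hcon
    push_neg at hcon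
    have hrank : 1 < Module.rank ℝ Mᗮ := by
      rw [← Module.finrank_eq_rank ℝ ↥Mᗮ]
      exact_mod_cast hcon
    have hconn := (isConnected_compl_singleton_of_one_lt_rank hrank (0 : Mᗮ)).isPreconnected
    set A : Set ↥Mᗮ := ((↑) : Mᗮ → EuclideanSpace ℝ (Fin d)) ⁻¹' Q with hA
    set B : Set ↥Mᗮ := ((↑) : Mᗮ → EuclideanSpace ℝ (Fin d)) ⁻¹' (-Q) with hB
    have hAcl : IsClosed A := hQclosed.preimage continuous_subtype_val
    have hBcl : IsClosed B := hQclosed.neg.preimage continuous_subtype_val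
    have hABunion : ∀ w : ↥Mᗮ, w ∈ A ∪ B := by
      intro w
      have : ((w : EuclideanSpace ℝ (Fin d))) ∈ Q ∪ (-Q) := hQtot ▸ Set.mem_univ _
      exact this
    have hABinter : A ∩ B ⊆ {0} := by
      rintro w ⟨hw1, hw2⟩
      have hwM : (w : EuclideanSpace ℝ (Fin d)) ∈ M ⊓ Mᗮ := ⟨⟨hw1, hw2⟩, w.2⟩
      rw [Submodule.inf_orthogonal_eq_bot, Submodule.mem_bot] at hwM
      exact Set.mem_singleton_iff.mpr (Subtype.ext hwM)
    -- a nonzero element with `u ∈ A`, `-u ∈ B`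
    have hWbot : Mᗮ ≠ ⊥ := by
      intro hb
      rw [hb] at hcon
      simp [finrank_bot] at hcon
    obtain ⟨w, hw, hw0⟩ := (Submodule.ne_bot_iff Mᗮ).mp hWbot
    obtain ⟨u, hu0, huA, huB⟩ : ∃ u : ↥Mᗮ, u ≠ 0 ∧ u ∈ A ∧ -u ∈ B := by
      rcases hABunion ⟨w, hw⟩ with h | h
      · refine ⟨⟨w, hw⟩, ?_, h, ?_⟩
        · simpa [Subtype.ext_iff] using hw0
        · show (((-⟨w, hw⟩ : ↥Mᗮ) : EuclideanSpace ℝ (Fin d))) ∈ -Q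
          rw [Set.mem_neg]
          simpa using (show w ∈ Q from h)
      · refine ⟨-⟨w, hw⟩, ?_, ?_, ?_⟩
        · simpa [Subtype.ext_iff] using hw0
        · show (((-⟨w, hw⟩ : ↥Mᗮ) : EuclideanSpace ℝ (Fin d))) ∈ Q
          simpa using Set.mem_neg.mp h
        · simpa using h
    have huB' : u ∉ B := by
      intro h
      exact hu0 (Set.mem_singleton_iff.mp (hABinter ⟨huA, h⟩))
    have huA' : -u ∉ A := by
      intro h
      have : -u = 0 := Set.mem_singleton_iff.mp (hABinter ⟨h, huB⟩)
      exact hu0 (neg_eq_zero.mp this)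
    have hsub : ({(0 : ↥Mᗮ)}ᶜ : Set ↥Mᗮ) ⊆ Bᶜ ∪ Aᶜ := by
      intro x hx
      by_contra hxc
      simp only [Set.mem_union, Set.mem_compl_iff, not_not, not_or] at hxc
      exact hx (hABinter ⟨hxc.2, hxc.1⟩)
    have hne1 : (({(0 : ↥Mᗮ)}ᶜ : Set ↥Mᗮ) ∩ Bᶜ).Nonempty :=
      ⟨u, by simpa using hu0, huB'⟩
    have hne2 : (({(0 : ↥Mᗮ)}ᶜ : Set ↥Mᗮ) ∩ Aᶜ).Nonempty :=
      ⟨-u, by simpa using hu0, huA'⟩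
    obtain ⟨z, _, hz⟩ := hconn Bᶜ Aᶜ hBcl.isOpen_compl hAcl.isOpen_compl hsub hne1 hne2
    rcases hABunion z with h | h
    · exact hz.2 h
    · exact hz.1 h
  have hW1 : Module.finrank ℝ Mᗮ = 1 := by omega
  omega
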